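/- Let L be a locally compact Hausdorff topological group with left Haar measure μ, M a compact open subgroup with μ(M) = 1, σ : M → ℂ a continuous group homomorphism with |σ(m)| = 1 for all m ∈ M, and p : L → ℂ given by p(y) = σ(y) for y ∈ M, p(y) = 0 otherwise. Fix x ∈ L, let L(x) = [M : M ∩ xMx⁻¹] (a finite index), and define I : L → ℂ by I(z) = ∫_L p(u) · p(x⁻¹u⁻¹z) dμ(u). Then μ(M ∩ xMx⁻¹) = 1/L(x), I(z) = 0 for all z ∉ MxM, and: (i) if σ(h) = σ(x⁻¹hx) for all h ∈ M ∩ xMx⁻¹, then I(hxk) = σ(h)σ(k)/L(x) for all h, k ∈ M, and ∫_L |I| dμ = 1; (ii) if σ(h) ≠ σ(x⁻¹hx) for some h ∈ M ∩ xMx⁻¹, then I is identically zero. -/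

import Mathlib

open MeasureTheory
open scoped ENNReal Pointwise

private lemma my_measure_smul_set {L : Type*} [Group L] [MeasurableSpace L]
    (μ : Measure L) [MeasurableMul L] [μ.IsMulLeftInvariant] (g : L) (s : Set L) : μ (g • s) = μ s := by
  have h : g • s = (fun z => g⁻¹ * z) ⁻¹' s := by
    ext z
    simp [Set.mem_smul_set_iff_inv_smul_mem, smul_eq_mul]
  rw [h, measure_preimage_mul]

private lemma my_key_decomp {L : Type*} [Group L] [MeasurableSpace L]
    (μ : Measure L) [MeasurableMul L] [μ.IsMulLeftInvariant]
    (M N : Subgroup L)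
    [Finite (M ⧸ N.subgroupOf M)]
    (S : Set L) (hSms : ∀ g : L, MeasurableSet (g • S))
    (hdis : ∀ m : L, m ∈ M → (m • S ∩ S).Nonempty → m ∈ N)
    (hstab : ∀ m : L, m ∈ N → m • S = S) :
    μ (⋃ m ∈ (M : Set L), m • S) = ((N.subgroupOf M).index : ℝ≥0∞) * μ S := by
  classical
  set H := N.subgroupOf M with hH
  haveI : Fintype (M ⧸ H) := Fintype.ofFinite _
  have hrel : ∀ a b : M, (a : M ⧸ H) = (b : M ⧸ H) ↔ ((a : L)⁻¹ * (b : L)) ∈ N := by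
    intro a b
    rw [QuotientGroup.eq]
    rw [hH, Subgroup.mem_subgroupOf]
    rfl
  have hcos : ∀ a b : M, ((a : L)⁻¹ * (b : L)) ∈ N → (a : L) • S = (b : L) • S := by
    intro a b hab
    calc (a : L) • S = (a : L) • (((a : L)⁻¹ * (b : L)) • S) := by rw [hstab _ hab]
    _ = (b : L) • S := by rw [smul_smul, mul_inv_cancel_left]
  have hcover : (⋃ m ∈ (M : Set L), m • S)
      = ⋃ q : M ⧸ H, ((Quotient.out q : M) : L) • S := by
    apply Set.Subset.antisymm
    · rintro z hz
      simp only [Set.mem_iUnion] at hz ⊢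
      obtain ⟨m, hm, hzm⟩ := hz
      refine ⟨QuotientGroup.mk (⟨m, hm⟩ : M), ?_⟩
      have h1 : ((Quotient.out (QuotientGroup.mk (⟨m, hm⟩ : M)) : M) : M ⧸ H)
          = ((⟨m, hm⟩ : M) : M ⧸ H) := QuotientGroup.out_eq' _
      have h2 := (hrel _ _).mp h1
      rw [hcos _ _ h2]
      exact hzm
    · rintro z hz
      simp only [Set.mem_iUnion] at hz
      obtain ⟨q, hq⟩ := hz
      simp only [Set.mem_iUnion]
      exact ⟨((Quotient.out q : M) : L), (Quotient.out q : M).2, hq⟩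
  have hdisj : Pairwise (Function.onFun Disjoint
      fun q : M ⧸ H => ((Quotient.out q : M) : L) • S) := by
    intro q q' hne
    rw [Function.onFun, Set.disjoint_left]
    intro z hzq hzq'
    apply hne
    set a : M := Quotient.out q
    set b : M := Quotient.out q'
    obtain ⟨s, hs, hsz⟩ := hzq
    obtain ⟨s', hs', hsz'⟩ := hzq'
    have hmm : ((a : L)⁻¹ * (b : L)) ∈ M := mul_mem (inv_mem a.2) b.2
    have hne' : (((a : L)⁻¹ * (b : L)) • S ∩ S).Nonempty := by
      refine ⟨(a : L)⁻¹ * z, ⟨s', hs', ?_⟩, ?_⟩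
      · simp only [smul_eq_mul] at hsz' ⊢
        rw [mul_assoc, hsz']
      · simp only [smul_eq_mul] at hsz
        rw [← hsz, inv_mul_cancel_left]
        exact hs
    have hmemN := hdis _ hmm hne'
    have h3 := (hrel a b).mpr hmemN
    rw [QuotientGroup.out_eq', QuotientGroup.out_eq'] at h3
    exact h3
  rw [hcover, measure_iUnion hdisj (fun q => hSms _)]
  simp_rw [my_measure_smul_set μ]
  rw [tsum_eq_sum (s := Finset.univ) (by simp), Finset.sum_const, Finset.card_univ,
    nsmul_eq_mul]
  congr 1
  exact congrArg Nat.cast ((Subgroup.index_eq_card H).trans Nat.card_eq_fintype_card).symm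


/-- Let `L` be a locally compact Hausdorff group with left Haar measure `μ`,
`M` compact open with `μ M = 1`, `σ : M → ℂ` a continuous unimodular character, and
`p = χ_M σ`.  For `x ∈ L` let `L(x) = [M : M ∩ x M x⁻¹]` and
`I z = ∫ p(u) p(x⁻¹ u⁻¹ z) dμ(u)` (this is `p ⋆ δ_x ⋆ p`).  Then
`μ (M ∩ x M x⁻¹) = 1/L(x)`, `I` vanishes off `M x M`, and: (i) if
`σ h = σ (x⁻¹ h x)` for all `h ∈ M ∩ x M x⁻¹` then `I (h x k) = σ h σ k / L(x)` for
`h, k ∈ M` and `∫ |I| dμ = 1`; (ii) otherwise `I ≡ 0`. -/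
theorem stmt_12 {L : Type*} [Group L] [TopologicalSpace L] [IsTopologicalGroup L]
    [LocallyCompactSpace L] [T2Space L] [MeasurableSpace L] [BorelSpace L]
    (μ : Measure L) [μ.IsHaarMeasure]
    (M : Subgroup L) (hMc : IsCompact (M : Set L)) (hMo : IsOpen (M : Set L))
    (hμM : μ (M : Set L) = 1)
    (σ : M →* ℂ) (hσc : Continuous σ) (hσu : ∀ m : M, ‖σ m‖ = 1)
    (p : L → ℂ)
    (hp : ∀ y : L, (∀ h : y ∈ M, p y = σ ⟨y, h⟩) ∧ (y ∉ M → p y = 0))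
    (x : L) (Lx : ℕ)
    (hLx : Lx = ((M ⊓ Subgroup.map (MulAut.conj x).toMonoidHom M).subgroupOf M).index)
    (I : L → ℂ) (hI : ∀ z : L, I z = ∫ u, p u * p (x⁻¹ * u⁻¹ * z) ∂μ) :
    μ ((M : Set L) ∩ {y : L | x⁻¹ * y * x ∈ M}) = (Lx : ℝ≥0∞)⁻¹ ∧
    (∀ z : L, (¬ ∃ m ∈ M, ∃ n ∈ M, z = m * x * n) → I z = 0) ∧
    ((∀ (h : L) (h1 : h ∈ M) (h2 : x⁻¹ * h * x ∈ M), σ ⟨h, h1⟩ = σ ⟨x⁻¹ * h * x, h2⟩) →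
      (∀ h k : M, I ((h : L) * x * (k : L)) = σ h * σ k / (Lx : ℂ)) ∧
      ∫ z, ‖I z‖ ∂μ = 1) ∧
    ((∃ (h : L) (h1 : h ∈ M) (h2 : x⁻¹ * h * x ∈ M), σ ⟨h, h1⟩ ≠ σ ⟨x⁻¹ * h * x, h2⟩) →
      ∀ z : L, I z = 0) := by
  classical
  set N : Subgroup L := M ⊓ Subgroup.map (MulAut.conj x).toMonoidHom M with hNdef
  -- membership characterization
  have hNiff : ∀ y : L, y ∈ N ↔ y ∈ M ∧ x⁻¹ * y * x ∈ M := by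
    intro y
    simp only [hNdef, Subgroup.mem_inf, Subgroup.mem_map, MulEquiv.coe_toMonoidHom,
      MulAut.conj_apply]
    constructor
    · rintro ⟨h1, m, hm, rfl⟩
      refine ⟨h1, ?_⟩
      have : x⁻¹ * (x * m * x⁻¹) * x = m := by group
      rwa [this]
    · rintro ⟨h1, h2⟩
      exact ⟨h1, ⟨x⁻¹ * y * x, h2, by group⟩⟩
  have hNset : ((M : Set L) ∩ {y : L | x⁻¹ * y * x ∈ M}) = (N : Set L) := by
    ext y; exact (hNiff y).symm
  -- basic p facts
  have hp1 : ∀ (y : L) (h : y ∈ M), p y = σ ⟨y, h⟩ := fun y => (hp y).1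
  have hp0 : ∀ y : L, y ∉ M → p y = 0 := fun y => (hp y).2
  have hpne : ∀ (y : L) (h : y ∈ M), p y ≠ 0 := by
    intro y h
    rw [hp1 y h]
    intro h0
    have := hσu ⟨y, h⟩
    rw [h0] at this
    simp at this
  have hpm : ∀ g h : L, (g ∈ M ∨ h ∈ M) → p (g * h) = p g * p h := by
    intro g h hgh
    by_cases hg : g ∈ M
    · by_cases hh : h ∈ M
      · rw [hp1 g hg, hp1 h hh, hp1 (g * h) (mul_mem hg hh), ← map_mul]
        exact congrArg σ (Subtype.ext rfl)
      · rw [hp0 h hh, hp0 (g * h) (fun hmem => hh (by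
          simpa using mul_mem (inv_mem hg) hmem)), mul_zero]
    · have hh : h ∈ M := hgh.resolve_left hg
      rw [hp0 g hg, hp0 (g * h) (fun hmem => hg (by
        simpa using mul_mem hmem (inv_mem hh))), zero_mul]
  -- topology / measurability
  have hNopen : IsOpen (N : Set L) := by
    rw [← hNset]
    exact hMo.inter (hMo.preimage (by continuity))
  have hMmeas : MeasurableSet (M : Set L) := hMo.measurableSet
  -- finiteness of index
  haveI : Finite (M ⧸ N.subgroupOf M) := by
    haveI : CompactSpace M := isCompact_iff_compactSpace.mp hMc
    apply Subgroup.quotient_finite_of_isOpen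
    exact hNopen.preimage continuous_subtype_val
  haveI : (N.subgroupOf M).FiniteIndex := Subgroup.finiteIndex_of_finite_quotient
  have hLx0 : Lx ≠ 0 := by
    rw [hLx]
    exact Subgroup.FiniteIndex.index_ne_zero
  -- μ N = Lx⁻¹
  have hμN : μ (N : Set L) = (Lx : ℝ≥0∞)⁻¹ := by
    have hdec := my_key_decomp μ M N (N : Set L)
      (fun g => ((hNopen.smul g).measurableSet))
      (fun m hm ⟨z, hz1, hz2⟩ => by
        obtain ⟨n, hn, rfl⟩ := hz1
        simp only [smul_eq_mul] at hz2
        have : m = (m * n) * n⁻¹ := by group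
        rw [this]
        exact mul_mem hz2 (inv_mem hn))
      (fun m hm => smul_coe_set hm)
    have hun : (⋃ m ∈ (M : Set L), m • (N : Set L)) = (M : Set L) := by
      apply Set.Subset.antisymm
      · rintro z hz
        simp only [Set.mem_iUnion] at hz
        obtain ⟨m, hm, n, hn, rfl⟩ := hz
        exact mul_mem hm ((hNiff n).mp hn).1
      · intro z hz
        simp only [Set.mem_iUnion]
        exact ⟨z, hz, 1, one_mem N, mul_one z⟩
    rw [hun, hμM, ← hLx] at hdec
    have := hdec.symm
    rw [mul_comm] at this
    exact ENNReal.eq_inv_of_mul_eq_one_left this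
  -- part 2: vanishing off MxM
  have part2 : ∀ z : L, (¬ ∃ m ∈ M, ∃ n ∈ M, z = m * x * n) → I z = 0 := by
    intro z hz
    have hfun : (fun u => p u * p (x⁻¹ * u⁻¹ * z)) = fun _ => (0 : ℂ) := by
      funext u
      by_cases hu : u ∈ M
      · by_cases hv : x⁻¹ * u⁻¹ * z ∈ M
        · exact absurd ⟨u, hu, x⁻¹ * u⁻¹ * z, hv, by group⟩ hz
        · rw [hp0 _ hv, mul_zero]
      · rw [hp0 _ hu, zero_mul]
    rw [hI z, hfun, integral_zero]
  -- the basic integral J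
  set J : ℂ := ∫ u, p u * p (x⁻¹ * u⁻¹ * x) ∂μ with hJdef
  have hIJ : ∀ h k : L, h ∈ M → k ∈ M → I (h * x * k) = p h * p k * J := by
    intro h k hh hk
    rw [hI]
    have step : (∫ u, p u * p (x⁻¹ * u⁻¹ * (h * x * k)) ∂μ)
        = ∫ u, p (h * u) * p (x⁻¹ * (h * u)⁻¹ * (h * x * k)) ∂μ :=
      (integral_mul_left_eq_self (fun u => p u * p (x⁻¹ * u⁻¹ * (h * x * k))) h).symm
    rw [step]
    have hfun : (fun u => p (h * u) * p (x⁻¹ * (h * u)⁻¹ * (h * x * k)))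
        = fun u => (p h * p k) * (p u * p (x⁻¹ * u⁻¹ * x)) := by
      funext u
      have e1 : x⁻¹ * (h * u)⁻¹ * (h * x * k) = (x⁻¹ * u⁻¹ * x) * k := by group
      rw [hpm h u (Or.inl hh), e1, hpm _ k (Or.inr hk)]
      ring
    rw [hfun, integral_const_mul]
  have hNmeas : MeasurableSet (N : Set L) := hNopen.measurableSet
  -- the double coset set T
  set T : Set L := ⋃ m ∈ (M : Set L), m • (x • (M : Set L)) with hTdef
  have hTmem : ∀ z : L, z ∈ T ↔ ∃ m ∈ M, ∃ n ∈ M, z = m * x * n := by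
    intro z
    simp only [hTdef, Set.mem_iUnion, Set.mem_smul_set, smul_eq_mul, SetLike.mem_coe]
    constructor
    · rintro ⟨m, hm, _, ⟨n, hn, rfl⟩, rfl⟩
      exact ⟨m, hm, n, hn, by rw [mul_assoc]⟩
    · rintro ⟨m, hm, n, hn, rfl⟩
      exact ⟨m, hm, x * n, ⟨n, hn, rfl⟩, by rw [mul_assoc]⟩
  have hTopen : IsOpen T := isOpen_biUnion (fun m _ => (hMo.smul x).smul m)
  have hμT : μ T = (Lx : ℝ≥0∞) := by
    have hdec := my_key_decomp μ M N (x • (M : Set L))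
      (fun g => ((hMo.smul x).measurableSet.const_smul g))
      (by
        rintro m hm ⟨z, hz1, hz2⟩
        obtain ⟨w, hw, hwz⟩ := hz1
        obtain ⟨k, hk, hkw⟩ := hw
        obtain ⟨k', hk', hk'z⟩ := hz2
        simp only [smul_eq_mul] at hwz hkw hk'z
        rw [hNiff]
        refine ⟨hm, ?_⟩
        rw [← hkw] at hwz
        rw [← hwz] at hk'z
        have hx2 : x⁻¹ * m * x * k = k' := by
          calc x⁻¹ * m * x * k = x⁻¹ * (m * (x * k)) := by group
          _ = x⁻¹ * (x * k') := by rw [hk'z]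
          _ = k' := by group
        have hx3 : x⁻¹ * m * x = k' * k⁻¹ := by rw [← hx2]; group
        rw [hx3]
        exact mul_mem hk' (inv_mem hk))
      (by
        intro m hm
        obtain ⟨hm1, hm2⟩ := (hNiff m).mp hm
        rw [smul_smul]
        have e : m * x = x * (x⁻¹ * m * x) := by group
        rw [e, ← smul_smul, smul_coe_set hm2])
    rw [← hTdef] at hdec
    rw [hdec, my_measure_smul_set μ x, hμM, mul_one, hLx]
  -- case (i)
  have parti : (∀ (h : L) (h1 : h ∈ M) (h2 : x⁻¹ * h * x ∈ M),
        σ ⟨h, h1⟩ = σ ⟨x⁻¹ * h * x, h2⟩) →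
      (∀ h k : M, I ((h : L) * x * (k : L)) = σ h * σ k / (Lx : ℂ)) ∧
      ∫ z, ‖I z‖ ∂μ = 1 := by
    intro hcase
    have hJval : J = ((Lx : ℝ)⁻¹ : ℂ) := by
      have hfun : (fun u => p u * p (x⁻¹ * u⁻¹ * x))
          = (N : Set L).indicator (fun _ => (1 : ℂ)) := by
        funext u
        by_cases hu : u ∈ N
        · obtain ⟨hu1, hu2⟩ := (hNiff u).mp hu
          have hu2' : x⁻¹ * u⁻¹ * x ∈ M := by
            have e : x⁻¹ * u⁻¹ * x = (x⁻¹ * u * x)⁻¹ := by group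
            rw [e]; exact inv_mem hu2
          have key1 : σ ⟨u⁻¹, inv_mem hu1⟩ = σ ⟨x⁻¹ * u⁻¹ * x, hu2'⟩ :=
            hcase u⁻¹ (inv_mem hu1) hu2'
          rw [Set.indicator_of_mem hu, hp1 u hu1, hp1 _ hu2', ← key1, ← map_mul]
          have e2 : (⟨u, hu1⟩ * ⟨u⁻¹, inv_mem hu1⟩ : M) = 1 := Subtype.ext (mul_inv_cancel u)
          rw [e2, map_one]
        · rw [Set.indicator_of_notMem hu]
          by_cases hu1 : u ∈ M
          · have hu2 : x⁻¹ * u⁻¹ * x ∉ M := fun hmem => hu ((hNiff u).mpr ⟨hu1, by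
              have e : x⁻¹ * u * x = (x⁻¹ * u⁻¹ * x)⁻¹ := by group
              rw [e]; exact inv_mem hmem⟩)
            rw [hp0 _ hu2, mul_zero]
          · rw [hp0 _ hu1, zero_mul]
      rw [hJdef, hfun, integral_indicator_const _ hNmeas, measureReal_def, hμN]
      rw [ENNReal.toReal_inv]
      simp [ENNReal.toReal_natCast]
    have hIval : ∀ h k : M, I ((h : L) * x * (k : L)) = σ h * σ k / (Lx : ℂ) := by
      intro h k
      rw [hIJ (h : L) (k : L) h.2 k.2, hp1 _ h.2, hp1 _ k.2, hJval, div_eq_mul_inv]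
      push_cast
      ring
    refine ⟨hIval, ?_⟩
    have hIabs : (fun z => (‖I z‖ : ℝ)) = T.indicator (fun _ => (Lx : ℝ)⁻¹) := by
      funext z
      by_cases hz : z ∈ T
      · obtain ⟨m, hm, n, hn, rfl⟩ := (hTmem z).mp hz
        rw [Set.indicator_of_mem hz]
        rw [show I (m * x * n) = σ ⟨m, hm⟩ * σ ⟨n, hn⟩ / (Lx : ℂ) from hIval ⟨m, hm⟩ ⟨n, hn⟩]
        rw [norm_div, norm_mul, hσu ⟨m, hm⟩, hσu ⟨n, hn⟩, Complex.norm_natCast]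
        simp
      · rw [Set.indicator_of_notMem hz, part2 z (fun hc => hz ((hTmem z).mpr hc)), norm_zero]
    rw [hIabs, integral_indicator_const _ hTopen.measurableSet, measureReal_def, hμT, ENNReal.toReal_natCast,
      smul_eq_mul]
    rw [mul_inv_cancel₀ (Nat.cast_ne_zero.mpr hLx0)]
  -- case (ii)
  have partii : (∃ (h : L) (h1 : h ∈ M) (h2 : x⁻¹ * h * x ∈ M),
        σ ⟨h, h1⟩ ≠ σ ⟨x⁻¹ * h * x, h2⟩) → ∀ z : L, I z = 0 := by
    rintro ⟨h₀, h1, h2, hneq⟩ z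
    have hinvmem : x⁻¹ * h₀⁻¹ * x ∈ M := by
      have e : x⁻¹ * h₀⁻¹ * x = (x⁻¹ * h₀ * x)⁻¹ := by group
      rw [e]; exact inv_mem h2
    have hJ0 : J = 0 := by
      set c : ℂ := p h₀ * p (x⁻¹ * h₀⁻¹ * x) with hc
      have hcJ : J = c * J := by
        have step : J = ∫ u, p (h₀ * u) * p (x⁻¹ * (h₀ * u)⁻¹ * x) ∂μ :=
          (integral_mul_left_eq_self (fun u => p u * p (x⁻¹ * u⁻¹ * x)) h₀).symm
        have hfun : (fun u => p (h₀ * u) * p (x⁻¹ * (h₀ * u)⁻¹ * x))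
            = fun u => c * (p u * p (x⁻¹ * u⁻¹ * x)) := by
          funext u
          have e1 : x⁻¹ * (h₀ * u)⁻¹ * x = (x⁻¹ * u⁻¹ * x) * (x⁻¹ * h₀⁻¹ * x) := by group
          rw [hpm h₀ u (Or.inl h1), e1, hpm _ _ (Or.inr hinvmem), hc]
          ring
        calc J = ∫ u, p (h₀ * u) * p (x⁻¹ * (h₀ * u)⁻¹ * x) ∂μ := step
        _ = ∫ u, c * (p u * p (x⁻¹ * u⁻¹ * x)) ∂μ := by rw [hfun]
        _ = c * J := integral_const_mul c _
      have hcne : c ≠ 1 := by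
        intro hc1
        apply hneq
        have e2 : (⟨x⁻¹ * h₀ * x, h2⟩ * ⟨x⁻¹ * h₀⁻¹ * x, hinvmem⟩ : M) = 1 :=
          Subtype.ext (by show (x⁻¹ * h₀ * x) * (x⁻¹ * h₀⁻¹ * x) = 1; group)
        have e3 : σ ⟨x⁻¹ * h₀ * x, h2⟩ * σ ⟨x⁻¹ * h₀⁻¹ * x, hinvmem⟩ = 1 := by
          rw [← map_mul, e2, map_one]
        have e4 : σ ⟨h₀, h1⟩ * σ ⟨x⁻¹ * h₀⁻¹ * x, hinvmem⟩ = 1 := by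
          rw [hc, hp1 _ h1, hp1 _ hinvmem] at hc1; exact hc1
        have hne0 : σ ⟨x⁻¹ * h₀⁻¹ * x, hinvmem⟩ ≠ 0 := by
          intro h0
          have habs := hσu ⟨x⁻¹ * h₀⁻¹ * x, hinvmem⟩
          rw [h0] at habs
          simp at habs
        exact mul_right_cancel₀ hne0 (e4.trans e3.symm)
      have hz : (1 - c) * J = 0 := by rw [sub_mul, one_mul, ← hcJ, sub_self]
      rcases mul_eq_zero.mp hz with h' | h'
      · exact absurd (sub_eq_zero.mp h').symm hcne
      · exact h'
    by_cases hz : ∃ m ∈ M, ∃ n ∈ M, z = m * x * n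
    · obtain ⟨m, hm, n, hn, rfl⟩ := hz
      rw [hIJ m n hm hn, hJ0, mul_zero]
    · exact part2 z hz
  exact ⟨hNset ▸ hμN, part2, parti, partii⟩
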